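/- arXiv:1804.10407 — 4 statements merged into one kernel-verified Lean document; each statement's English description precedes it below -/
import Mathlib

section
/- Let A ∈ ℂ^{n×n} be nonzero and suppose there exists a unit vector z with |⟨Az, z⟩| = r(A) and ⟨Ax, x⟩ = 0, where z = x + y is the orthogonal decomposition with x ∈ range(A*) and y ∈ ker(A). Then ‖A‖ = 2·r(A). -/
open scoped InnerProductSpace

noncomputable def toCLM {n : ℕ} (A : Matrix (Fin n) (Fin n) ℂ) :
    EuclideanSpace ℂ (Fin n) →L[ℂ] EuclideanSpace ℂ (Fin n) :=
  Matrix.toEuclideanCLM (𝕜 := ℂ) A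

noncomputable def opNorm {n : ℕ} (A : Matrix (Fin n) (Fin n) ℂ) : ℝ := ‖toCLM A‖

noncomputable def numRadius {n : ℕ} (A : Matrix (Fin n) (Fin n) ℂ) : ℝ :=
  sSup {r : ℝ | ∃ z : EuclideanSpace ℂ (Fin n), ‖z‖ = 1 ∧ r = ‖(⟪z, toCLM A z⟫_ℂ)‖}

lemma numRadius_bddAbove {n : ℕ} (A : Matrix (Fin n) (Fin n) ℂ) :
    BddAbove {r : ℝ | ∃ z : EuclideanSpace ℂ (Fin n), ‖z‖ = 1 ∧
      r = ‖(⟪z, toCLM A z⟫_ℂ)‖} := by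
  refine ⟨opNorm A, ?_⟩
  rintro r ⟨w, hw, rfl⟩
  have h1 : ‖(⟪w, toCLM A w⟫_ℂ)‖ = ‖(⟪w, toCLM A w⟫_ℂ)‖ := rfl
  calc ‖(⟪w, toCLM A w⟫_ℂ)‖ ≤ ‖w‖ * ‖toCLM A w‖ := by
        rw [h1]; exact norm_inner_le_norm w _
    _ ≤ ‖w‖ * (‖toCLM A‖ * ‖w‖) := by
        gcongr; exact (toCLM A).le_opNorm w
    _ = opNorm A := by rw [hw, one_mul, mul_one, opNorm]

lemma quad_bound {n : ℕ} (A : Matrix (Fin n) (Fin n) ℂ) (hr : 0 ≤ numRadius A)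
    (w : EuclideanSpace ℂ (Fin n)) :
    ‖(⟪w, toCLM A w⟫_ℂ)‖ ≤ numRadius A * ‖w‖ ^ 2 := by
  rcases eq_or_ne w 0 with rfl | hw
  · simp
  · have hnw : ‖w‖ ≠ 0 := norm_ne_zero_iff.mpr hw
    set c : ℂ := (‖w‖ : ℂ)⁻¹ with hc
    have hcw : ‖c • w‖ = 1 := by
      rw [norm_smul, hc]
      simp [norm_inv, hnw]
    have hmem : ‖(⟪c • w, toCLM A (c • w)⟫_ℂ)‖ ≤ numRadius A :=
      le_csSup (numRadius_bddAbove A) ⟨c • w, hcw, rfl⟩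
    have hexp : ⟪c • w, toCLM A (c • w)⟫_ℂ = (starRingEnd ℂ) c * c * ⟪w, toCLM A w⟫_ℂ := by
      rw [map_smul, inner_smul_left, inner_smul_right]; ring
    rw [hexp] at hmem
    have habs : ‖((starRingEnd ℂ) c * c * ⟪w, toCLM A w⟫_ℂ)‖
        = (‖w‖ ^ 2)⁻¹ * ‖(⟪w, toCLM A w⟫_ℂ)‖ := by
      rw [norm_mul, norm_mul, Complex.norm_conj, hc, norm_inv, Complex.norm_real, Real.norm_eq_abs,
        abs_of_nonneg (norm_nonneg w), sq, mul_inv]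
    rw [habs] at hmem
    have h2 : (0:ℝ) < ‖w‖ ^ 2 := by positivity
    rw [inv_mul_le_iff₀ h2] at hmem
    linarith [hmem]

lemma inner_bound {n : ℕ} (A : Matrix (Fin n) (Fin n) ℂ) (hr : 0 ≤ numRadius A)
    (u v : EuclideanSpace ℂ (Fin n)) :
    ‖(⟪toCLM A v, u⟫_ℂ)‖ ≤ numRadius A * (‖u‖ ^ 2 + ‖v‖ ^ 2) := by
  set T := toCLM A
  set r := numRadius A
  have hpol := inner_map_polarization (T.toLinearMap) u v
  simp only [ContinuousLinearMap.coe_coe] at hpol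
  have hq : ∀ w : EuclideanSpace ℂ (Fin n), ‖(⟪T w, w⟫_ℂ)‖ ≤ r * ‖w‖ ^ 2 := by
    intro w
    have := quad_bound A hr w
    have hcj : ‖(⟪T w, w⟫_ℂ)‖ = ‖(⟪w, T w⟫_ℂ)‖ := by
      rw [← inner_conj_symm w (T w), Complex.norm_conj]
    rw [hcj]; exact this
  have hIv : ‖Complex.I • v‖ = ‖v‖ := by
    rw [norm_smul]; simp
  have hpar1 : ‖u + v‖ ^ 2 + ‖u - v‖ ^ 2 = 2 * (‖u‖ ^ 2 + ‖v‖ ^ 2) := by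
    have := parallelogram_law_with_norm ℂ u v
    nlinarith [this]
  have hpar2 : ‖u + Complex.I • v‖ ^ 2 + ‖u - Complex.I • v‖ ^ 2
      = 2 * (‖u‖ ^ 2 + ‖v‖ ^ 2) := by
    have := parallelogram_law_with_norm ℂ u (Complex.I • v)
    rw [hIv] at this
    nlinarith [this]
  rw [hpol]
  have htri : ‖(⟪T (u + v), u + v⟫_ℂ - ⟪T (u - v), u - v⟫_ℂ +
        Complex.I * ⟪T (u + Complex.I • v), u + Complex.I • v⟫_ℂ -
        Complex.I * ⟪T (u - Complex.I • v), u - Complex.I • v⟫_ℂ)‖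
      ≤ ‖(⟪T (u + v), u + v⟫_ℂ)‖ + ‖(⟪T (u - v), u - v⟫_ℂ)‖
        + ‖(⟪T (u + Complex.I • v), u + Complex.I • v⟫_ℂ)‖
        + ‖(⟪T (u - Complex.I • v), u - Complex.I • v⟫_ℂ)‖ := by
    calc _ ≤ ‖(⟪T (u + v), u + v⟫_ℂ - ⟪T (u - v), u - v⟫_ℂ +
          Complex.I * ⟪T (u + Complex.I • v), u + Complex.I • v⟫_ℂ)‖
          + ‖(Complex.I * ⟪T (u - Complex.I • v), u - Complex.I • v⟫_ℂ)‖ :=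
        norm_sub_le _ _
      _ ≤ ‖(⟪T (u + v), u + v⟫_ℂ - ⟪T (u - v), u - v⟫_ℂ)‖
          + ‖(Complex.I * ⟪T (u + Complex.I • v), u + Complex.I • v⟫_ℂ)‖
          + ‖(Complex.I * ⟪T (u - Complex.I • v), u - Complex.I • v⟫_ℂ)‖ := by
        gcongr; exact norm_add_le _ _
      _ ≤ _ := by
        simp only [norm_mul, Complex.norm_I, one_mul]
        have := norm_sub_le (⟪T (u + v), u + v⟫_ℂ) (⟪T (u - v), u - v⟫_ℂ)
        linarith
  rw [norm_div]
  have h4 : ‖(4:ℂ)‖ = 4 := by norm_num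
  rw [h4]
  rw [div_le_iff₀ (by norm_num : (0:ℝ) < 4)]
  calc _ ≤ _ := htri
    _ ≤ r * ‖u + v‖ ^ 2 + r * ‖u - v‖ ^ 2 + r * ‖u + Complex.I • v‖ ^ 2
        + r * ‖u - Complex.I • v‖ ^ 2 := by
      gcongr <;> exact hq _
    _ = r * ((‖u + v‖ ^ 2 + ‖u - v‖ ^ 2) + (‖u + Complex.I • v‖ ^ 2 + ‖u - Complex.I • v‖ ^ 2)) := by
      ring
    _ = r * (‖u‖ ^ 2 + ‖v‖ ^ 2) * 4 := by rw [hpar1, hpar2]; ring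

lemma opNorm_le {n : ℕ} (A : Matrix (Fin n) (Fin n) ℂ) (hr : 0 ≤ numRadius A) :
    opNorm A ≤ 2 * numRadius A := by
  apply ContinuousLinearMap.opNorm_le_bound _ (by positivity)
  intro v
  set T := toCLM A
  rcases eq_or_ne (T v) 0 with hTv | hTv
  · rw [hTv]; simp; positivity
  rcases eq_or_ne v 0 with rfl | hv
  · simp at hTv
  have hnv : 0 < ‖v‖ := norm_pos_iff.mpr hv
  have hnTv : 0 < ‖T v‖ := norm_pos_iff.mpr hTv
  set c : ℝ := ‖v‖ / ‖T v‖ with hc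
  set u : EuclideanSpace ℂ (Fin n) := (c : ℂ) • T v with hu
  have hcu : ‖u‖ = ‖v‖ := by
    rw [hu, norm_smul]
    simp only [Complex.norm_real, Real.norm_eq_abs, hc, abs_div, abs_norm]
    field_simp
  have habs : ‖(⟪T v, u⟫_ℂ)‖ = ‖v‖ * ‖T v‖ := by
    show ‖(⟪T v, u⟫_ℂ)‖ = _
    rw [hu, inner_smul_right, inner_self_eq_norm_sq_to_K, norm_mul, norm_pow,
      RCLike.norm_ofReal, abs_norm, Complex.norm_real, Real.norm_eq_abs,
      abs_of_nonneg (by positivity : (0:ℝ) ≤ c), hc]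
    field_simp
  have hb := inner_bound A hr u v
  rw [habs, hcu] at hb
  have : ‖v‖ * ‖T v‖ ≤ 2 * numRadius A * ‖v‖ * ‖v‖ := by nlinarith
  calc ‖T v‖ = (‖v‖ * ‖T v‖) / ‖v‖ := by field_simp
    _ ≤ (2 * numRadius A * ‖v‖ * ‖v‖) / ‖v‖ := by gcongr
    _ = 2 * numRadius A * ‖v‖ := by field_simp

theorem stmt3 {n : ℕ} (A : Matrix (Fin n) (Fin n) ℂ) (hA : A ≠ 0)
    (z x y : EuclideanSpace ℂ (Fin n)) (hz : ‖z‖ = 1) (hdec : z = x + y)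
    (hx : x ∈ LinearMap.range (ContinuousLinearMap.adjoint (toCLM A) : EuclideanSpace ℂ (Fin n) →ₗ[ℂ] EuclideanSpace ℂ (Fin n)))
    (hy : toCLM A y = 0)
    (hmax : ‖⟪z, toCLM A z⟫_ℂ‖ = numRadius A)
    (hxx : ⟪x, toCLM A x⟫_ℂ = 0) :
    opNorm A = 2 * numRadius A := by
  set T := toCLM A
  set r := numRadius A
  have hr : 0 ≤ r := hmax ▸ norm_nonneg _
  have hle : opNorm A ≤ 2 * r := opNorm_le A hr
  -- reverse direction
  obtain ⟨u, hu⟩ := hx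
  have hxy : ⟪x, y⟫_ℂ = 0 := by
    rw [← hu, ContinuousLinearMap.coe_coe, ContinuousLinearMap.adjoint_inner_left, hy, inner_zero_right]
  have hpyth : ‖x‖ ^ 2 + ‖y‖ ^ 2 = 1 := by
    have h1 := norm_add_sq_eq_norm_sq_add_norm_sq_of_inner_eq_zero x y hxy
    rw [← hdec, hz] at h1
    nlinarith [h1]
  have hTz : T z = T x := by rw [hdec, map_add, hy, add_zero]
  have hiz : ⟪z, T z⟫_ℂ = ⟪y, T x⟫_ℂ := by
    rw [hTz, hdec, inner_add_left, hxx, zero_add]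
  have hb : r ≤ ‖y‖ * (‖T‖ * ‖x‖) := by
    rw [← hmax, hiz]
    calc ‖(⟪y, T x⟫_ℂ)‖ = ‖(⟪y, T x⟫_ℂ)‖ := rfl
      _ ≤ ‖y‖ * ‖T x‖ := norm_inner_le_norm y _
      _ ≤ ‖y‖ * (‖T‖ * ‖x‖) := by gcongr; exact T.le_opNorm x
  have hxy2 : ‖y‖ * ‖x‖ ≤ 1 / 2 := by nlinarith [sq_nonneg (‖x‖ - ‖y‖)]
  have hTnn : (0:ℝ) ≤ ‖T‖ := norm_nonneg _
  have hge : 2 * r ≤ opNorm A := by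
    have : r ≤ ‖T‖ * (1/2) := by
      calc r ≤ ‖y‖ * (‖T‖ * ‖x‖) := hb
        _ = ‖T‖ * (‖y‖ * ‖x‖) := by ring
        _ ≤ ‖T‖ * (1/2) := by gcongr
    show 2 * r ≤ ‖T‖
    linarith
  linarith
end

section
/- If the matrix A/‖A‖ is unitarily similar to the block-diagonal matrix diag(J, B) where J = [[0,1],[0,0]] and r(B) ≤ 1/2, then ‖A‖ = 2·r(A). -/
open scoped InnerProductSpace

def J : Matrix (Fin 2) (Fin 2) ℂ := !![0, 1; 0, 0]

lemma toCLM_apply' {k : ℕ} (M : Matrix (Fin k) (Fin k) ℂ) (w : EuclideanSpace ℂ (Fin k))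
    (i : Fin k) : toCLM M w i = ∑ j, M i j * w j := rfl

lemma inner_toCLM {k : ℕ} (M : Matrix (Fin k) (Fin k) ℂ) (w : EuclideanSpace ℂ (Fin k)) :
    ⟪w, toCLM M w⟫_ℂ = ∑ i, ∑ j, starRingEnd ℂ (w i) * (M i j * w j) := by
  simp [PiLp.inner_apply, RCLike.inner_apply, toCLM_apply', Finset.mul_sum]
  refine Finset.sum_congr rfl fun i _ => ?_
  rw [Finset.sum_mul]
  exact Finset.sum_congr rfl fun j _ => mul_comm _ _

lemma toCLM_mul {k : ℕ} (X Y : Matrix (Fin k) (Fin k) ℂ) (v : EuclideanSpace ℂ (Fin k)) :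
    toCLM (X * Y) v = toCLM X (toCLM Y v) := by
  have h1 : Matrix.toEuclideanCLM (𝕜 := ℂ) (X * Y)
      = Matrix.toEuclideanCLM (𝕜 := ℂ) X * Matrix.toEuclideanCLM (𝕜 := ℂ) Y := map_mul _ _ _
  simp only [toCLM, h1, ContinuousLinearMap.mul_apply]

lemma toCLM_one {k : ℕ} (v : EuclideanSpace ℂ (Fin k)) :
    toCLM (1 : Matrix (Fin k) (Fin k) ℂ) v = v := by
  have h2 : Matrix.toEuclideanCLM (𝕜 := ℂ) (1 : Matrix (Fin k) (Fin k) ℂ) = 1 := map_one _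
  simp only [toCLM, h2, ContinuousLinearMap.one_apply]

lemma numRadius_bdd {k : ℕ} (Bm : Matrix (Fin k) (Fin k) ℂ) :
    BddAbove {r : ℝ | ∃ z : EuclideanSpace ℂ (Fin k), ‖z‖ = 1 ∧
      r = ‖(⟪z, toCLM Bm z⟫_ℂ)‖} := by
  refine ⟨‖toCLM Bm‖, ?_⟩
  rintro r ⟨z, hz, rfl⟩
  calc ‖⟪z, toCLM Bm z⟫_ℂ‖ ≤ ‖z‖ * ‖toCLM Bm z‖ := norm_inner_le_norm _ _
    _ ≤ ‖z‖ * (‖toCLM Bm‖ * ‖z‖) := by gcongr; exact (toCLM Bm).le_opNorm z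
    _ = ‖toCLM Bm‖ := by rw [hz]; ring

lemma quad_le {k : ℕ} (Bm : Matrix (Fin k) (Fin k) ℂ) (y : EuclideanSpace ℂ (Fin k)) :
    ‖(⟪y, toCLM Bm y⟫_ℂ)‖ ≤ numRadius Bm * ‖y‖ ^ 2 := by
  rcases eq_or_ne y 0 with rfl | hy
  · simp
  · have hny : (0:ℝ) < ‖y‖ := norm_pos_iff.mpr hy
    set c : ℂ := ((‖y‖ : ℂ))⁻¹ with hc
    set z : EuclideanSpace ℂ (Fin k) := c • y with hz
    have hzn : ‖z‖ = 1 := by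
      rw [hz, norm_smul, hc, norm_inv, Complex.norm_real, Real.norm_eq_abs,
        abs_of_pos hny, inv_mul_cancel₀ hny.ne']
    have hinner : ⟪z, toCLM Bm z⟫_ℂ = starRingEnd ℂ c * (c * ⟪y, toCLM Bm y⟫_ℂ) := by
      rw [hz, map_smul, inner_smul_left, inner_smul_right]
    have habs : ‖(⟪z, toCLM Bm z⟫_ℂ)‖
        = ‖y‖⁻¹ * ‖y‖⁻¹ * ‖(⟪y, toCLM Bm y⟫_ℂ)‖ := by
      rw [hinner]
      simp [hc, norm_mul, Complex.norm_real, abs_of_pos hny, mul_assoc]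
    have hmem : ‖(⟪z, toCLM Bm z⟫_ℂ)‖ ≤ numRadius Bm :=
      le_csSup (numRadius_bdd Bm) ⟨z, hzn, rfl⟩
    rw [habs] at hmem
    have h2 : ‖y‖⁻¹ * ‖y‖⁻¹ * ‖(⟪y, toCLM Bm y⟫_ℂ)‖ * ‖y‖ ^ 2
        ≤ numRadius Bm * ‖y‖ ^ 2 := by
      have := sq_nonneg ‖y‖; nlinarith
    have hinv : ‖y‖⁻¹ * ‖y‖ = 1 := inv_mul_cancel₀ hny.ne'
    have key : ‖y‖⁻¹ * ‖y‖⁻¹ * ‖(⟪y, toCLM Bm y⟫_ℂ)‖ * ‖y‖ ^ 2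
        = ‖(⟪y, toCLM Bm y⟫_ℂ)‖ := by
      calc ‖y‖⁻¹ * ‖y‖⁻¹ * ‖(⟪y, toCLM Bm y⟫_ℂ)‖ * ‖y‖ ^ 2
          = ‖(⟪y, toCLM Bm y⟫_ℂ)‖ * ((‖y‖⁻¹ * ‖y‖) * (‖y‖⁻¹ * ‖y‖)) := by ring
        _ = ‖(⟪y, toCLM Bm y⟫_ℂ)‖ := by rw [hinv]; ring
    linarith

lemma toCLM_mem_unitary {k : ℕ} (U : Matrix (Fin k) (Fin k) ℂ)
    (h : U ∈ Matrix.unitaryGroup (Fin k) ℂ) :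
    toCLM U ∈ unitary (EuclideanSpace ℂ (Fin k) →L[ℂ] EuclideanSpace ℂ (Fin k)) := by
  have h1 := (Unitary.mem_iff.mp h).1
  have h2 := (Unitary.mem_iff.mp h).2
  rw [Unitary.mem_iff]
  simp only [toCLM]
  exact ⟨by rw [← map_star, ← map_mul, h1, map_one],
         by rw [← map_star, ← map_mul, h2, map_one]⟩

lemma unitary_inner {k : ℕ} (U : Matrix (Fin k) (Fin k) ℂ)
    (h : U ∈ Matrix.unitaryGroup (Fin k) ℂ) (a b : EuclideanSpace ℂ (Fin k)) :
    ⟪toCLM U a, toCLM U b⟫_ℂ = ⟪a, b⟫_ℂ :=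
  ContinuousLinearMap.inner_map_map_of_mem_unitary (toCLM_mem_unitary U h) a b

lemma unitary_norm {k : ℕ} (U : Matrix (Fin k) (Fin k) ℂ)
    (h : U ∈ Matrix.unitaryGroup (Fin k) ℂ) (v : EuclideanSpace ℂ (Fin k)) :
    ‖toCLM U v‖ = ‖v‖ :=
  ContinuousLinearMap.norm_map_of_mem_unitary (toCLM_mem_unitary U h) v

lemma decomp {n m : ℕ} (B : Matrix (Fin m) (Fin m) ℂ) (e : Fin n ≃ Fin 2 ⊕ Fin m)
    (w : EuclideanSpace ℂ (Fin n)) :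
    ⟪w, toCLM (Matrix.reindex e.symm e.symm (Matrix.fromBlocks J 0 0 B)) w⟫_ℂ
      = starRingEnd ℂ (w (e.symm (Sum.inl 0))) * w (e.symm (Sum.inl 1))
        + ⟪(WithLp.equiv 2 (Fin m → ℂ)).symm (fun q => w (e.symm (Sum.inr q))),
            toCLM B ((WithLp.equiv 2 (Fin m → ℂ)).symm
              (fun q => w (e.symm (Sum.inr q))))⟫_ℂ := by
  rw [inner_toCLM, inner_toCLM]
  have hM : ∀ i j, (Matrix.reindex e.symm e.symm (Matrix.fromBlocks J 0 0 B)) i j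
      = Matrix.fromBlocks J 0 0 B (e i) (e j) := by
    intro i j; simp [Matrix.reindex_apply, Matrix.submatrix_apply]
  simp only [hM]
  have key : (∑ i, ∑ j, starRingEnd ℂ (w i) * (Matrix.fromBlocks J 0 0 B (e i) (e j) * w j))
      = ∑ p, ∑ q, starRingEnd ℂ (w (e.symm p)) *
          (Matrix.fromBlocks J 0 0 B p q * w (e.symm q)) := by
    apply Fintype.sum_equiv e
    intro i
    apply Fintype.sum_equiv e
    intro j
    rw [e.symm_apply_apply, e.symm_apply_apply]
  rw [key]
  simp only [Fintype.sum_sum_type, Matrix.fromBlocks_apply₁₁, Matrix.fromBlocks_apply₁₂,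
    Matrix.fromBlocks_apply₂₁, Matrix.fromBlocks_apply₂₂, Matrix.zero_apply, mul_zero, zero_mul,
    Finset.sum_const_zero, add_zero, zero_add]
  congr 1
  norm_num [J, Fin.sum_univ_two, Matrix.cons_val_zero, Matrix.cons_val_one, Matrix.head_cons]

lemma norm_decomp {n m : ℕ} (e : Fin n ≃ Fin 2 ⊕ Fin m) (w : EuclideanSpace ℂ (Fin n)) :
    ‖w‖ ^ 2 = ‖w (e.symm (Sum.inl 0))‖ ^ 2
      + ‖w (e.symm (Sum.inl 1))‖ ^ 2
      + ‖(WithLp.equiv 2 (Fin m → ℂ)).symm (fun q => w (e.symm (Sum.inr q)))‖ ^ 2 := by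
  have h1 : ‖w‖ ^ 2 = ∑ i, ‖w i‖ ^ 2 := by
    rw [EuclideanSpace.norm_eq, Real.sq_sqrt (by positivity)]
  have h2 : ‖(WithLp.equiv 2 (Fin m → ℂ)).symm (fun q => w (e.symm (Sum.inr q)))‖ ^ 2
      = ∑ q : Fin m, ‖w (e.symm (Sum.inr q))‖ ^ 2 := by
    rw [EuclideanSpace.norm_eq, Real.sq_sqrt (by positivity)]
    simp
  rw [h1, h2]
  have key : (∑ i, ‖w i‖ ^ 2) = ∑ p : Fin 2 ⊕ Fin m, ‖w (e.symm p)‖ ^ 2 := by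
    apply Fintype.sum_equiv e
    intro i
    rw [e.symm_apply_apply]
  rw [key, Fintype.sum_sum_type, Fin.sum_univ_two]

theorem stmt7 {n m : ℕ} (A : Matrix (Fin n) (Fin n) ℂ) (hA : A ≠ 0)
    (B : Matrix (Fin m) (Fin m) ℂ) (e : Fin n ≃ Fin 2 ⊕ Fin m)
    (Q : Matrix (Fin n) (Fin n) ℂ) (hQ : Q ∈ Matrix.unitaryGroup (Fin n) ℂ)
    (hsim : (opNorm A)⁻¹ • A =
      Q * (Matrix.reindex e.symm e.symm (Matrix.fromBlocks J 0 0 B)) * star Q)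
    (hB : numRadius B ≤ 1 / 2) :
    opNorm A = 2 * numRadius A := by
  set M : Matrix (Fin n) (Fin n) ℂ :=
    Matrix.reindex e.symm e.symm (Matrix.fromBlocks J 0 0 B) with hMdef
  set N : ℝ := opNorm A with hNdef
  have hclm : toCLM A ≠ 0 := by
    intro h
    rw [toCLM, EmbeddingLike.map_eq_zero_iff] at h
    exact hA h
  have hNpos : 0 < N := by
    rw [hNdef]
    exact norm_pos_iff.mpr hclm
  have hNC : (N : ℂ) ≠ 0 := Complex.ofReal_ne_zero.mpr hNpos.ne'
  -- A = N • (Q M Q*)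
  have hA1 : A = (N : ℂ) • (Q * M * star Q) := by
    ext i j
    have h2 : ((opNorm A)⁻¹ • A) i j = (Q * M * star Q) i j := by rw [hsim]
    rw [Matrix.smul_apply] at h2
    rw [Matrix.smul_apply, smul_eq_mul, ← h2]
    rw [Complex.real_smul, Complex.ofReal_inv, mul_inv_cancel_left₀ hNC]
  -- key application formula
  have key : ∀ z : EuclideanSpace ℂ (Fin n),
      toCLM A z = (N : ℂ) • toCLM Q (toCLM M (toCLM (star Q) z)) := by
    intro z
    conv_lhs => rw [hA1]
    have hs : toCLM ((N : ℂ) • (Q * M * star Q)) = (N : ℂ) • toCLM (Q * M * star Q) := by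
      simp only [toCLM, map_smul]
    rw [hs, ContinuousLinearMap.smul_apply, toCLM_mul, toCLM_mul]
  -- abs formula
  have habs : ∀ z : EuclideanSpace ℂ (Fin n),
      ‖(⟪z, toCLM A z⟫_ℂ)‖
        = N * ‖(⟪toCLM (star Q) z, toCLM M (toCLM (star Q) z)⟫_ℂ)‖ := by
    intro z
    set w := toCLM (star Q) z with hw
    have hz : toCLM Q w = z := by
      rw [hw, ← toCLM_mul, (Unitary.mem_iff.mp hQ).2, toCLM_one]
    rw [key z, inner_smul_right, norm_mul, Complex.norm_real, Real.norm_eq_abs, abs_of_pos hNpos]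
    congr 1
    have hw2 : toCLM (star Q) (toCLM Q w) = w := by
      rw [← toCLM_mul, (Unitary.mem_iff.mp hQ).1, toCLM_one]
    conv_lhs => rw [← hz]
    rw [unitary_inner Q hQ, hw2]
  -- upper bound for the model matrix
  have hub : ∀ w : EuclideanSpace ℂ (Fin n), ‖w‖ = 1 →
      ‖(⟪w, toCLM M w⟫_ℂ)‖ ≤ 1 / 2 := by
    intro w hw
    rw [hMdef, decomp B e w]
    set a := w (e.symm (Sum.inl 0))
    set b := w (e.symm (Sum.inl 1))
    set y := (WithLp.equiv 2 (Fin m → ℂ)).symm (fun q => w (e.symm (Sum.inr q))) with hy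
    have h1 : ‖starRingEnd ℂ a * b‖ = ‖a‖ * ‖b‖ := by
      rw [norm_mul, Complex.norm_conj]
    have h2 : ‖(⟪y, toCLM B y⟫_ℂ)‖ ≤ (1 / 2) * ‖y‖ ^ 2 := by
      calc ‖(⟪y, toCLM B y⟫_ℂ)‖ ≤ numRadius B * ‖y‖ ^ 2 := quad_le B y
        _ ≤ (1 / 2) * ‖y‖ ^ 2 := by
            have := sq_nonneg ‖y‖
            nlinarith
    have h3 : ‖a‖ ^ 2 + ‖b‖ ^ 2 + ‖y‖ ^ 2 = 1 := by
      have := norm_decomp e w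
      rw [hw] at this
      rw [one_pow] at this
      exact this.symm
    calc ‖starRingEnd ℂ a * b + ⟪y, toCLM B y⟫_ℂ‖
        ≤ ‖starRingEnd ℂ a * b‖ + ‖(⟪y, toCLM B y⟫_ℂ)‖ :=
          norm_add_le _ _
      _ ≤ ‖a‖ * ‖b‖ + (1 / 2) * ‖y‖ ^ 2 := by rw [h1]; linarith
      _ ≤ 1 / 2 := by nlinarith [sq_nonneg (‖a‖ - ‖b‖)]
  -- the witness vector
  set c : ℂ := ((Real.sqrt 2 : ℝ) : ℂ)⁻¹ with hcdef
  set w₀ : EuclideanSpace ℂ (Fin n) := (WithLp.equiv 2 (Fin n → ℂ)).symm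
    (fun i => Sum.elim ![c, c] (fun _ => (0 : ℂ)) (e i)) with hw₀
  have hw₀app : ∀ p : Fin 2 ⊕ Fin m, w₀ (e.symm p) = Sum.elim ![c, c] (fun _ => (0 : ℂ)) p := by
    intro p
    rw [hw₀]
    simp [e.apply_symm_apply]
  have hcc : starRingEnd ℂ c * c = 1 / 2 := by
    rw [hcdef, ← Complex.ofReal_inv, Complex.conj_ofReal, ← Complex.ofReal_mul]
    have h5 : (Real.sqrt 2)⁻¹ * (Real.sqrt 2)⁻¹ = 1 / 2 := by
      rw [← mul_inv, Real.mul_self_sqrt (by norm_num : (0:ℝ) ≤ 2)]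
      norm_num
    rw [h5]
    push_cast
    norm_num
  have habsc : ‖c‖ ^ 2 = 1 / 2 := by
    rw [hcdef, norm_inv, Complex.norm_real, Real.norm_eq_abs,
      abs_of_pos (Real.sqrt_pos.mpr (by norm_num : (0:ℝ) < 2)), inv_pow,
      Real.sq_sqrt (by norm_num : (0:ℝ) ≤ 2)]
    norm_num
  have hy₀ : (WithLp.equiv 2 (Fin m → ℂ)).symm (fun q => w₀ (e.symm (Sum.inr q)))
      = (0 : EuclideanSpace ℂ (Fin m)) := by
    have h7 : (fun q => w₀ (e.symm (Sum.inr q))) = (fun _ : Fin m => (0 : ℂ)) :=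
      funext fun q => by rw [hw₀app]; rfl
    rw [h7]
    rfl
  have hw₀norm : ‖w₀‖ = 1 := by
    have h6 := norm_decomp e w₀
    rw [hw₀app, hw₀app, hy₀] at h6
    simp only [Sum.elim_inl, Matrix.cons_val_zero, Matrix.cons_val_one, Matrix.head_cons,
      norm_zero] at h6
    rw [habsc] at h6
    have h7 : ‖w₀‖ ^ 2 = 1 := by rw [h6]; norm_num
    calc ‖w₀‖ = Real.sqrt (‖w₀‖ ^ 2) := (Real.sqrt_sq (norm_nonneg _)).symm
      _ = 1 := by rw [h7, Real.sqrt_one]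
  have hmw₀ : ‖(⟪w₀, toCLM M w₀⟫_ℂ)‖ = 1 / 2 := by
    rw [hMdef, decomp B e w₀, hy₀, hw₀app, hw₀app]
    simp only [Sum.elim_inl, Matrix.cons_val_zero, Matrix.cons_val_one, Matrix.head_cons,
      inner_zero_left, add_zero]
    rw [hcc]
    norm_num
  set z₀ : EuclideanSpace ℂ (Fin n) := toCLM Q w₀ with hz₀def
  have hsz : toCLM (star Q) z₀ = w₀ := by
    rw [hz₀def, ← toCLM_mul, (Unitary.mem_iff.mp hQ).1, toCLM_one]
  have hz₀norm : ‖z₀‖ = 1 := by rw [hz₀def, unitary_norm Q hQ, hw₀norm]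
  have hgt : IsGreatest {r : ℝ | ∃ z : EuclideanSpace ℂ (Fin n), ‖z‖ = 1 ∧
      r = ‖(⟪z, toCLM A z⟫_ℂ)‖} (N * (1 / 2)) := by
    constructor
    · exact ⟨z₀, hz₀norm, by rw [habs z₀, hsz, hmw₀]⟩
    · rintro r ⟨z, hz, rfl⟩
      rw [habs z]
      have h8 : ‖toCLM (star Q) z‖ = 1 := by
        rw [unitary_norm (star Q) (Unitary.star_mem hQ), hz]
      have h9 := hub _ h8
      nlinarith
  have h9 : numRadius A = N * (1 / 2) := by
    rw [numRadius]
    exact hgt.csSup_eq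
  rw [h9]
  ring
end

section
/- Let A ∈ ℂ^{n×n} with ‖A‖ = 2·r(A) and let m be the dimension of the maximum right singular subspace V_max(A) = {x : ‖Ax‖ = ‖A‖‖x‖}. Then m ≤ n/2. -/
open scoped InnerProductSpace

lemma numRadius_bound {n : ℕ} (A : Matrix (Fin n) (Fin n) ℂ) (z : EuclideanSpace ℂ (Fin n))
    (hz : ‖z‖ = 1) : ‖(⟪z, toCLM A z⟫_ℂ)‖ ≤ numRadius A := by
  apply le_csSup
  · refine ⟨‖toCLM A‖, ?_⟩
    rintro r ⟨w, hw, rfl⟩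
    calc ‖(⟪w, toCLM A w⟫_ℂ)‖ ≤ ‖w‖ * ‖toCLM A w‖ := by
          exact norm_inner_le_norm _ _
      _ ≤ ‖w‖ * (‖toCLM A‖ * ‖w‖) := by
          have := (toCLM A).le_opNorm w
          have h0 : (0:ℝ) ≤ ‖w‖ := norm_nonneg _
          nlinarith
      _ = ‖toCLM A‖ := by rw [hw]; ring
  · exact ⟨z, hz, rfl⟩

lemma abs_inner_le {n : ℕ} (A : Matrix (Fin n) (Fin n) ℂ)
    (h : opNorm A = 2 * numRadius A) (z : EuclideanSpace ℂ (Fin n)) :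
    ‖(⟪z, toCLM A z⟫_ℂ)‖ ≤ (opNorm A / 2) * ‖z‖ ^ 2 := by
  rcases eq_or_ne z 0 with rfl | hz
  · simp
  · have hz0 : (0:ℝ) < ‖z‖ := norm_pos_iff.mpr hz
    set u : EuclideanSpace ℂ (Fin n) := ((‖z‖:ℂ))⁻¹ • z with hu
    have hu1 : ‖u‖ = 1 := by
      rw [hu, norm_smul]
      simp [abs_of_pos hz0]
      field_simp
    have hb := numRadius_bound A u hu1
    have hinner : ⟪u, toCLM A u⟫_ℂ = ((‖z‖:ℂ))⁻¹ ^ 2 * ⟪z, toCLM A z⟫_ℂ := by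
      rw [hu]
      rw [map_smul, inner_smul_left, inner_smul_right]
      rw [map_inv₀, Complex.conj_ofReal]
      ring
    rw [hinner] at hb
    rw [norm_mul] at hb
    have habs : ‖(((‖z‖:ℂ))⁻¹ ^ 2)‖ = (‖z‖⁻¹)^2 := by
      rw [norm_pow, norm_inv, Complex.norm_real, Real.norm_eq_abs, abs_of_pos hz0]
    rw [habs] at hb
    have hnr : numRadius A = opNorm A / 2 := by linarith
    rw [hnr] at hb
    have h2 : (0:ℝ) < ‖z‖^2 := by positivity
    calc ‖(⟪z, toCLM A z⟫_ℂ)‖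
        = ‖z‖^2 * ((‖z‖⁻¹)^2 * ‖(⟪z, toCLM A z⟫_ℂ)‖) := by
          field_simp
      _ ≤ ‖z‖^2 * (opNorm A / 2) := by
          apply mul_le_mul_of_nonneg_left hb (le_of_lt h2)
      _ = (opNorm A / 2) * ‖z‖^2 := by ring

set_option maxHeartbeats 2000000 in
open Complex in
lemma key {n : ℕ} (A : Matrix (Fin n) (Fin n) ℂ)
    (h : opNorm A = 2 * numRadius A) (x : EuclideanSpace ℂ (Fin n))
    (hx : ‖toCLM A x‖ = opNorm A * ‖x‖) : ⟪x, toCLM A x⟫_ℂ = 0 := by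
  set T := toCLM A with hT
  set k := opNorm A with hkdef
  have hk0 : (0:ℝ) ≤ k := norm_nonneg _
  rcases eq_or_lt_of_le hk0 with hk | hk
  · have h1 : ‖T x‖ = 0 := by rw [hx, ← hk]; ring
    have h2 : T x = 0 := norm_eq_zero.mp h1
    rw [h2]; exact inner_zero_right _
  rcases eq_or_ne x 0 with rfl | hx0
  · simp
  have hNpos : (0:ℝ) < ‖x‖ := norm_pos_iff.mpr hx0
  obtain ⟨N, hNdef⟩ : ∃ N : ℝ, N = ‖x‖ ^ 2 := ⟨_, rfl⟩
  have hN : (0:ℝ) < N := by rw [hNdef]; positivity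
  have hknz : (k:ℂ) ≠ 0 := by
    simp only [ne_eq, Complex.ofReal_eq_zero]; exact ne_of_gt hk
  obtain ⟨g, hg⟩ : ∃ g : EuclideanSpace ℂ (Fin n), g = ((k:ℝ):ℂ)⁻¹ • T x := ⟨_, rfl⟩
  have hgTx : ⟪g, T x⟫_ℂ = (k:ℂ) * (N:ℂ) := by
    rw [hg, inner_smul_left, map_inv₀, Complex.conj_ofReal,
      inner_self_eq_norm_sq_to_K, hx, hNdef]
    push_cast
    field_simp
    rfl
  have hxg : ⟪x, g⟫_ℂ = ((k:ℂ))⁻¹ * ⟪x, T x⟫_ℂ := by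
    rw [hg, inner_smul_right]
  have hgnorm : ‖g‖ = ‖x‖ := by
    rw [hg, norm_smul, hx, norm_inv, Complex.norm_real, Real.norm_eq_abs,
      abs_of_pos hk]
    field_simp
  have hw : ∀ c : ℂ, ‖c‖ = 1 →
      ⟪x + c • g, T (x + c • g)⟫_ℂ
        = (⟪x, T x⟫_ℂ + ⟪g, T g⟫_ℂ) + c * ⟪x, T g⟫_ℂ
          + (starRingEnd ℂ) c * ((k:ℂ) * (N:ℂ)) := by
    intro c hc
    have hcc : (starRingEnd ℂ) c * c = 1 := by
      rw [mul_comm, Complex.mul_conj, Complex.normSq_eq_norm_sq, hc]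
      norm_num
    have expand : ⟪x + c • g, T (x + c • g)⟫_ℂ
        = ⟪x, T x⟫_ℂ + c * ⟪x, T g⟫_ℂ + (starRingEnd ℂ) c * ((k:ℂ) * (N:ℂ))
          + ((starRingEnd ℂ) c * c) * ⟪g, T g⟫_ℂ := by
      simp only [map_add, map_smul, inner_add_left, inner_add_right,
        inner_smul_left, inner_smul_right, hgTx]
      ring
    rw [expand, hcc]; ring
  have hzn : ∀ c : ℂ, ‖c‖ = 1 →
      ‖x + c • g‖ ^ 2 = 2 * N + 2 * (c * (((k:ℂ))⁻¹ * ⟪x, T x⟫_ℂ)).re := by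
    intro c hc
    rw [norm_add_sq (𝕜 := ℂ), inner_smul_right, hxg, norm_smul, hgnorm,
      hc, one_mul]
    simp only [RCLike.re_to_complex]
    rw [← hNdef]
    ring
  have hineq : ∀ c : ℂ, ‖c‖ = 1 →
      ‖((⟪x, T x⟫_ℂ + ⟪g, T g⟫_ℂ) + c * ⟪x, T g⟫_ℂ
          + (starRingEnd ℂ) c * ((k:ℂ) * (N:ℂ)))‖
        ≤ k * N + (c * ⟪x, T x⟫_ℂ).re := by
    intro c hc
    have h1 := abs_inner_le A h (x + c • g)
    rw [hw c hc, hzn c hc, ← hkdef] at h1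
    have hre : (c * (((k:ℂ))⁻¹ * ⟪x, T x⟫_ℂ)).re = k⁻¹ * (c * ⟪x, T x⟫_ℂ).re := by
      have h2 : c * (((k:ℂ))⁻¹ * ⟪x, T x⟫_ℂ) = ((k⁻¹:ℝ):ℂ) * (c * ⟪x, T x⟫_ℂ) := by
        push_cast; ring
      rw [h2]
      simp [Complex.mul_re]
    rw [hre] at h1
    calc ‖((⟪x, T x⟫_ℂ + ⟪g, T g⟫_ℂ) + c * ⟪x, T g⟫_ℂ
          + (starRingEnd ℂ) c * ((k:ℂ) * (N:ℂ)))‖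
        ≤ k / 2 * (2 * N + 2 * (k⁻¹ * (c * ⟪x, T x⟫_ℂ).re)) := h1
      _ = k * N + (c * ⟪x, T x⟫_ℂ).re := by field_simp
  set p := ⟪x, T x⟫_ℂ with hpdef
  set q := ⟪g, T g⟫_ℂ with hqdef
  set bb := ⟪x, T g⟫_ℂ with hbbdef
  set κ : ℂ := (k:ℂ) * (N:ℂ) with hκdef
  have key2 : ∀ c : ℂ, ‖c‖ = 1 →
      (c * (p + q + c * bb + (starRingEnd ℂ) c * κ)).re ≤ k * N + (c * p).re := by
    intro c hc
    have h1 := hineq c hc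
    have h2 : (c * (p + q + c * bb + (starRingEnd ℂ) c * κ)).re
        ≤ ‖(c * (p + q + c * bb + (starRingEnd ℂ) c * κ))‖ :=
      Complex.re_le_norm _
    rw [norm_mul, hc, one_mul] at h2
    have h3 : ‖(p + q + c * bb + (starRingEnd ℂ) c * κ)‖
        = ‖(p + q + (c * bb + (starRingEnd ℂ) c * κ))‖ := by ring_nf
    calc (c * (p + q + c * bb + (starRingEnd ℂ) c * κ)).re
        ≤ ‖(p + q + c * bb + (starRingEnd ℂ) c * κ)‖ := h2
      _ ≤ k * N + (c * p).re := by rw [h3] at h1 ⊢; exact h1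
  have hc1 : ‖(1:ℂ)‖ = 1 := by simp
  have hcI : ‖Complex.I‖ = 1 := Complex.norm_I
  have hcn1 : ‖(-1:ℂ)‖ = 1 := by simp
  have hcnI : ‖(-Complex.I)‖ = 1 := by simp
  have k0 := key2 1 hc1
  have k1 := key2 Complex.I hcI
  have k2 := key2 (-1) hcn1
  have k3 := key2 (-Complex.I) hcnI
  have hsum : (1:ℂ) * (p + q + 1 * bb + (starRingEnd ℂ) 1 * κ)
      + Complex.I * (p + q + Complex.I * bb + (starRingEnd ℂ) Complex.I * κ)
      + (-1) * (p + q + (-1) * bb + (starRingEnd ℂ) (-1) * κ)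
      + (-Complex.I) * (p + q + (-Complex.I) * bb + (starRingEnd ℂ) (-Complex.I) * κ)
      = 4 * κ := by
    rw [map_one, Complex.conj_I, map_neg, map_neg, Complex.conj_I, neg_neg, map_one]
    linear_combination (2 * bb - 2 * κ) * Complex.I_sq
  have hsumre := congrArg Complex.re hsum
  rw [Complex.add_re, Complex.add_re, Complex.add_re] at hsumre
  have hκre : ((4:ℂ) * κ).re = 4 * (k * N) := by
    rw [hκdef]
    have : (4:ℂ) * ((k:ℂ) * (N:ℂ)) = ((4 * (k * N) : ℝ) : ℂ) := by push_cast; ring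
    rw [this, Complex.ofReal_re]
  rw [hκre] at hsumre
  have hpsum : ((1:ℂ) * p).re + (Complex.I * p).re + ((-1:ℂ) * p).re
      + ((-Complex.I) * p).re = 0 := by
    simp [Complex.mul_re, Complex.I_re, Complex.I_im, Complex.neg_re, Complex.neg_im]
  -- force equalities
  have e0 : ((1:ℂ) * (p + q + 1 * bb + (starRingEnd ℂ) 1 * κ)).re = k * N + ((1:ℂ) * p).re := by
    linarith
  have e1 : (Complex.I * (p + q + Complex.I * bb + (starRingEnd ℂ) Complex.I * κ)).re
      = k * N + (Complex.I * p).re := by linarith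
  have e2 : ((-1:ℂ) * (p + q + (-1) * bb + (starRingEnd ℂ) (-1) * κ)).re
      = k * N + ((-1:ℂ) * p).re := by linarith
  have e3 : ((-Complex.I) * (p + q + (-Complex.I) * bb + (starRingEnd ℂ) (-Complex.I) * κ)).re
      = k * N + ((-Complex.I) * p).re := by linarith
  have imzero : ∀ c : ℂ, ‖c‖ = 1 →
      (c * (p + q + c * bb + (starRingEnd ℂ) c * κ)).re = k * N + (c * p).re →
      (c * (p + q + c * bb + (starRingEnd ℂ) c * κ)).im = 0 := by
    intro c hc he
    have h1 := hineq c hc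
    have habs : ‖(c * (p + q + c * bb + (starRingEnd ℂ) c * κ))‖
        = (c * (p + q + c * bb + (starRingEnd ℂ) c * κ)).re := by
      apply le_antisymm
      · rw [norm_mul, hc, one_mul, he]; exact h1
      · exact Complex.re_le_norm _
    have h2 : (c * (p + q + c * bb + (starRingEnd ℂ) c * κ)).im
        * (c * (p + q + c * bb + (starRingEnd ℂ) c * κ)).im = 0 := by
      have h4 : (‖(c * (p + q + c * bb + (starRingEnd ℂ) c * κ))‖) ^ 2
          = (c * (p + q + c * bb + (starRingEnd ℂ) c * κ)).re
            * (c * (p + q + c * bb + (starRingEnd ℂ) c * κ)).re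
          + (c * (p + q + c * bb + (starRingEnd ℂ) c * κ)).im
            * (c * (p + q + c * bb + (starRingEnd ℂ) c * κ)).im := by
        rw [Complex.sq_norm]; exact Complex.normSq_apply _
      rw [habs] at h4
      nlinarith [h4]
    exact mul_self_eq_zero.mp h2
  have i0 := imzero 1 hc1 e0
  have i1 := imzero Complex.I hcI e1
  have i2 := imzero (-1) hcn1 e2
  have i3 := imzero (-Complex.I) hcnI e3
  clear hw hzn hineq key2 k0 k1 k2 k3 imzero hsum hgTx hxg hgnorm hsumre hκre
  simp only [hκdef, Complex.mul_re, Complex.mul_im, Complex.add_re, Complex.add_im,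
    Complex.I_re, Complex.I_im, Complex.neg_re, Complex.neg_im, Complex.one_re,
    Complex.one_im, Complex.ofReal_re, Complex.ofReal_im, map_one, map_neg,
    Complex.conj_I, mul_zero, zero_mul, mul_one, one_mul, sub_zero, zero_sub,
    mul_neg, neg_mul, neg_neg, zero_add, add_zero, neg_zero] at e0 e1 e2 e3 i0 i1 i2 i3
  rw [Complex.ext_iff]
  constructor
  · simp only [Complex.zero_re]; linarith
  · simp only [Complex.zero_im]; linarith

set_option maxHeartbeats 1000000 in
theorem stmt8 {n : ℕ} (A : Matrix (Fin n) (Fin n) ℂ) (hA : A ≠ 0)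
    (h : opNorm A = 2 * numRadius A) :
    2 * Module.finrank ℂ (Submodule.span ℂ
      {x : EuclideanSpace ℂ (Fin n) | ‖toCLM A x‖ = opNorm A * ‖x‖}) ≤ n := by
  classical
  set T := toCLM A with hT
  set k := opNorm A with hk
  have hTne : T ≠ 0 := by
    intro h0
    apply hA
    have h1 : Matrix.toEuclideanCLM (𝕜 := ℂ) (n := Fin n) A
        = Matrix.toEuclideanCLM (𝕜 := ℂ) (n := Fin n) 0 := by
      rw [map_zero]; exact h0
    exact (Matrix.toEuclideanCLM (𝕜 := ℂ) (n := Fin n)).injective h1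
  have hk0 : (0:ℝ) < k := norm_pos_iff.mpr hTne
  have hadjnorm : ‖ContinuousLinearMap.adjoint T‖ = ‖T‖ :=
    LinearIsometryEquiv.norm_map
      (ContinuousLinearMap.adjoint (𝕜 := ℂ) (E := EuclideanSpace ℂ (Fin n))
        (F := EuclideanSpace ℂ (Fin n))) T
  have hmem : ∀ x : EuclideanSpace ℂ (Fin n), ‖T x‖ = k * ‖x‖ ↔
      ContinuousLinearMap.adjoint T (T x) = (((k^2:ℝ)):ℂ) • x := by
    intro x
    constructor
    · intro hx
      have hre : RCLike.re (⟪ContinuousLinearMap.adjoint T (T x), ((k^2:ℝ):ℂ) • x⟫_ℂ)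
          = k^2 * ‖T x‖^2 := by
        rw [inner_smul_right, ContinuousLinearMap.adjoint_inner_left,
          inner_self_eq_norm_sq_to_K]
        norm_cast
        simp [Complex.mul_re, ← Complex.ofReal_pow]
      have hn1 : ‖ContinuousLinearMap.adjoint T (T x)‖ ≤ k * ‖T x‖ := by
        calc ‖ContinuousLinearMap.adjoint T (T x)‖
            ≤ ‖ContinuousLinearMap.adjoint T‖ * ‖T x‖ :=
              (ContinuousLinearMap.adjoint T).le_opNorm _
          _ = k * ‖T x‖ := by
              have hTk : ‖T‖ = k := rfl
              rw [hadjnorm, hTk]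
      have hn2 : ‖((k^2:ℝ):ℂ) • x‖ = k^2 * ‖x‖ := by
        rw [norm_smul, Complex.norm_real, Real.norm_eq_abs, abs_of_pos (by positivity)]
      have hsq : ‖ContinuousLinearMap.adjoint T (T x) - ((k^2:ℝ):ℂ) • x‖^2 ≤ 0 := by
        rw [norm_sub_sq (𝕜 := ℂ), hre, hn2]
        have hTx0 : (0:ℝ) ≤ ‖T x‖ := norm_nonneg _
        have hax0 : (0:ℝ) ≤ ‖ContinuousLinearMap.adjoint T (T x)‖ := norm_nonneg _
        have hn1sq := pow_le_pow_left₀ hax0 hn1 2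
        have hx2 : ‖T x‖^2 = (k*‖x‖)^2 := by rw [hx]
        nlinarith [hn1sq, hx2]
      have hz : ContinuousLinearMap.adjoint T (T x) - ((k^2:ℝ):ℂ) • x = 0 := by
        have h5 : ‖ContinuousLinearMap.adjoint T (T x) - ((k^2:ℝ):ℂ) • x‖ = 0 := by
          nlinarith [norm_nonneg (ContinuousLinearMap.adjoint T (T x) - ((k^2:ℝ):ℂ) • x)]
        exact norm_eq_zero.mp h5
      exact sub_eq_zero.mp hz
    · intro hx
      have h2 : RCLike.re (⟪x, ContinuousLinearMap.adjoint T (T x)⟫_ℂ) = ‖T x‖^2 := by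
        rw [ContinuousLinearMap.adjoint_inner_right, inner_self_eq_norm_sq]
      have h4 : RCLike.re (⟪x, ContinuousLinearMap.adjoint T (T x)⟫_ℂ) = k^2 * ‖x‖^2 := by
        rw [hx, inner_smul_right, inner_self_eq_norm_sq_to_K]
        norm_cast
        simp [Complex.mul_re, ← Complex.ofReal_pow]
      have h1 : ‖T x‖^2 = (k * ‖x‖)^2 := by rw [mul_pow]; linarith
      have h6 : ‖T x‖ = Real.sqrt (‖T x‖^2) := (Real.sqrt_sq (norm_nonneg _)).symm
      rw [h6, h1, Real.sqrt_sq (mul_nonneg hk0.le (norm_nonneg x))]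
  set W : Submodule ℂ (EuclideanSpace ℂ (Fin n)) :=
    LinearMap.ker (((ContinuousLinearMap.adjoint T).comp T
      - ((k^2:ℝ):ℂ) • ContinuousLinearMap.id ℂ (EuclideanSpace ℂ (Fin n)) :
        EuclideanSpace ℂ (Fin n) →L[ℂ] EuclideanSpace ℂ (Fin n)) :
        EuclideanSpace ℂ (Fin n) →ₗ[ℂ] EuclideanSpace ℂ (Fin n)) with hWdef
  have hWmem : ∀ x : EuclideanSpace ℂ (Fin n), x ∈ W ↔ ‖T x‖ = k * ‖x‖ := by
    intro x
    rw [hWdef, LinearMap.mem_ker, ContinuousLinearMap.coe_coe]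
    rw [hmem x]
    constructor
    · intro h1
      have h2 : ((ContinuousLinearMap.adjoint T).comp T
          - ((k^2:ℝ):ℂ) • ContinuousLinearMap.id ℂ (EuclideanSpace ℂ (Fin n))) x
          = ContinuousLinearMap.adjoint T (T x) - ((k^2:ℝ):ℂ) • x := by
        simp [ContinuousLinearMap.sub_apply, ContinuousLinearMap.smul_apply]
      rw [h2] at h1
      exact sub_eq_zero.mp h1
    · intro h1
      have h2 : ((ContinuousLinearMap.adjoint T).comp T
          - ((k^2:ℝ):ℂ) • ContinuousLinearMap.id ℂ (EuclideanSpace ℂ (Fin n))) x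
          = ContinuousLinearMap.adjoint T (T x) - ((k^2:ℝ):ℂ) • x := by
        simp [ContinuousLinearMap.sub_apply, ContinuousLinearMap.smul_apply]
      rw [h2, h1, sub_self]
  have hset : {x : EuclideanSpace ℂ (Fin n) | ‖T x‖ = k * ‖x‖} = (W : Set (EuclideanSpace ℂ (Fin n))) := by
    ext x
    simp only [Set.mem_setOf_eq, SetLike.mem_coe]
    exact (hWmem x).symm
  have hspan : Submodule.span ℂ {x : EuclideanSpace ℂ (Fin n) | ‖T x‖ = k * ‖x‖} = W := by
    rw [hset]; exact Submodule.span_eq W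
  have hQ : ∀ v ∈ W, ⟪v, T v⟫_ℂ = 0 := by
    intro v hv
    exact key A h v ((hWmem v).mp hv)
  have hB : ∀ u ∈ W, ∀ v ∈ W, ⟪u, T v⟫_ℂ = 0 := by
    intro u hu v hv
    have h1 := hQ (u + v) (W.add_mem hu hv)
    have h2 := hQ (u + Complex.I • v) (W.add_mem hu (W.smul_mem _ hv))
    have h3 := hQ u hu
    have h4 := hQ v hv
    simp only [map_add, map_smul, inner_add_left, inner_add_right,
      inner_smul_left, inner_smul_right, Complex.conj_I, h3, h4] at h1 h2
    -- h1 : ⟪u, T v⟫ + ⟪v, T u⟫ = 0 (roughly)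
    -- h2 : I * ⟪u, T v⟫ + (-I) * (I * ... ) etc
    have hI2 := Complex.I_sq
    linear_combination (1/2 : ℂ) * h1 - (Complex.I/2) * h2
      + ((⟪u, T v⟫_ℂ - ⟪v, T u⟫_ℂ)/2) * hI2
  have hmap : ∀ v ∈ W, T v ∈ Wᗮ := by
    intro v hv
    rw [Submodule.mem_orthogonal]
    intro u hu
    exact hB u hu v hv
  let φ : W →ₗ[ℂ] (Wᗮ : Submodule ℂ (EuclideanSpace ℂ (Fin n))) :=
    (T : EuclideanSpace ℂ (Fin n) →ₗ[ℂ] EuclideanSpace ℂ (Fin n)).restrict hmap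
  have hφinj : Function.Injective φ := by
    intro a b hab
    have h1 : T a = T b := congrArg Subtype.val hab
    have h2 : T ((a:EuclideanSpace ℂ (Fin n)) - b) = 0 := by
      rw [map_sub, h1, sub_self]
    have h3 : ‖T ((a:EuclideanSpace ℂ (Fin n)) - b)‖ = k * ‖(a:EuclideanSpace ℂ (Fin n)) - b‖ :=
      (hWmem _).mp (W.sub_mem a.2 b.2)
    rw [h2, norm_zero] at h3
    have h4 : ‖(a:EuclideanSpace ℂ (Fin n)) - b‖ = 0 := by
      rcases mul_eq_zero.mp h3.symm with h5 | h5
      · exact absurd h5 (ne_of_gt hk0)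
      · exact h5
    have h6 : (a:EuclideanSpace ℂ (Fin n)) - b = 0 := norm_eq_zero.mp h4
    exact Subtype.ext (sub_eq_zero.mp h6)
  have hfin : Module.finrank ℂ W ≤ Module.finrank ℂ (Wᗮ : Submodule ℂ (EuclideanSpace ℂ (Fin n))) :=
    LinearMap.finrank_le_finrank_of_injective hφinj
  have hadd : Module.finrank ℂ W + Module.finrank ℂ (Wᗮ : Submodule ℂ (EuclideanSpace ℂ (Fin n)))
      = Module.finrank ℂ (EuclideanSpace ℂ (Fin n)) :=
    Submodule.finrank_add_finrank_orthogonal W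
  have hE : Module.finrank ℂ (EuclideanSpace ℂ (Fin n)) = n := finrank_euclideanSpace_fin
  rw [hspan]
  omega
end

section
/- Let A ∈ ℂ^{n×n} with ‖A‖ = 2·r(A). Then the maximum right singular subspace V_max(A) is contained in ker(A*) ∩ range(A*), and the maximum left singular subspace U_max(A) is contained in ker(A) ∩ range(A); in particular V_max(A) ⊥ U_max(A) and A is singular. -/
open scoped InnerProductSpace
open ContinuousLinearMap Complex

section bounds
variable {E : Type*} [NormedAddCommGroup E] [InnerProductSpace ℂ E] [CompleteSpace E]

set_option linter.unusedSectionVars false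

lemma selfadj_norm_le (S : E →L[ℂ] E) (hS : IsSelfAdjoint S) {c : ℝ} (hc : 0 ≤ c)
    (h : ∀ x : E, ‖x‖ = 1 → ‖(⟪x, S x⟫_ℂ)‖ ≤ c) : ‖S‖ ≤ c := by
  -- homogeneous version
  have h' : ∀ x : E, ‖(⟪x, S x⟫_ℂ)‖ ≤ c * (‖x‖ * ‖x‖) := by
    intro x
    rcases eq_or_ne x 0 with rfl | hx
    · simp
    · have hnx : ‖x‖ ≠ 0 := norm_ne_zero_iff.2 hx
      have h1 : ‖(‖x‖⁻¹ : ℂ) • x‖ = 1 := by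
        rw [norm_smul]
        simp [norm_inv, hnx]
      have := h _ h1
      rw [map_smul, inner_smul_left, inner_smul_right] at this
      have hre : (starRingEnd ℂ) ((‖x‖ : ℂ)⁻¹) = ((‖x‖ : ℂ)⁻¹) := by
        simp [Complex.conj_ofReal]
      rw [hre] at this
      have habs : ‖((‖x‖:ℂ)⁻¹ * ((‖x‖:ℂ)⁻¹ * ⟪x, S x⟫_ℂ))‖
          = ‖x‖⁻¹ * (‖x‖⁻¹ * ‖⟪x, S x⟫_ℂ‖) := by
        simp [norm_mul]
      rw [habs] at this
      have hpos : (0:ℝ) < ‖x‖ := norm_pos_iff.2 hx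
      rw [inv_mul_le_iff₀ hpos, inv_mul_le_iff₀ hpos] at this
      calc ‖⟪x, S x⟫_ℂ‖ ≤ ‖x‖ * (‖x‖ * c) := this
        _ = c * (‖x‖ * ‖x‖) := by ring
  have key : ∀ x : E, ‖S x‖ ≤ c * ‖x‖ := by
    intro x
    rcases eq_or_ne (S x) 0 with h0 | h0
    · simp [h0, mul_nonneg hc (norm_nonneg x)]
    · set y : E := ((‖x‖ : ℂ) / (‖S x‖ : ℂ)) • S x with hy
      have hny : ‖y‖ = ‖x‖ := by
        rw [hy, norm_smul]
        simp [norm_div, abs_of_nonneg, norm_ne_zero_iff.2 h0, div_mul_cancel₀]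
      have hpol : ⟪S (x+y), x+y⟫_ℂ - ⟪S (x-y), x-y⟫_ℂ
          = 2 * (⟪S x, y⟫_ℂ + ⟪S y, x⟫_ℂ) := by
        simp only [map_add, map_sub, inner_add_left, inner_add_right,
          inner_sub_left, inner_sub_right]
        ring
      have hsym : ⟪S y, x⟫_ℂ = (starRingEnd ℂ) ⟪S x, y⟫_ℂ := by
        rw [← hS.adjoint_eq, ContinuousLinearMap.adjoint_inner_left, inner_conj_symm,
          hS.adjoint_eq]
      have hval : ⟪S x, y⟫_ℂ = ((‖x‖ * ‖S x‖ : ℝ) : ℂ) := by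
        rw [hy, inner_smul_right, inner_self_eq_norm_sq_to_K]
        have : ((‖S x‖ : ℂ)) ≠ 0 := by
          simpa using norm_ne_zero_iff.2 h0
        field_simp
        push_cast; ring_nf; rfl
      have hre : (⟪S (x+y), x+y⟫_ℂ - ⟪S (x-y), x-y⟫_ℂ).re = 4 * (‖x‖ * ‖S x‖) := by
        rw [hpol, hsym, hval]
        simp [Complex.add_conj]
        ring
      have hb1 : ‖⟪S (x+y), x+y⟫_ℂ‖ ≤ c * (‖x+y‖ * ‖x+y‖) := by
        rw [← inner_conj_symm, RCLike.norm_conj]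
        exact h' _
      have hb2 : ‖⟪S (x-y), x-y⟫_ℂ‖ ≤ c * (‖x-y‖ * ‖x-y‖) := by
        rw [← inner_conj_symm, RCLike.norm_conj]
        exact h' _
      have hpar : ‖x+y‖ * ‖x+y‖ + ‖x-y‖ * ‖x-y‖ = 2 * (‖x‖*‖x‖ + ‖y‖*‖y‖) := by
        simpa only [sq] using parallelogram_law_with_norm ℂ x y
      have h4 : 4 * (‖x‖ * ‖S x‖) ≤ c * (‖x+y‖*‖x+y‖) + c * (‖x-y‖*‖x-y‖) := by
        rw [← hre]
        have := Complex.re_le_norm (⟪S (x+y), x+y⟫_ℂ - ⟪S (x-y), x-y⟫_ℂ)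
        calc (⟪S (x+y), x+y⟫_ℂ - ⟪S (x-y), x-y⟫_ℂ).re
            ≤ ‖⟪S (x+y), x+y⟫_ℂ - ⟪S (x-y), x-y⟫_ℂ‖ := by
              simpa using this
          _ ≤ ‖⟪S (x+y), x+y⟫_ℂ‖ + ‖⟪S (x-y), x-y⟫_ℂ‖ := norm_sub_le _ _
          _ ≤ _ := add_le_add hb1 hb2
      have : 4 * (‖x‖ * ‖S x‖) ≤ 2 * c * (‖x‖*‖x‖ + ‖y‖*‖y‖) := by
        calc 4 * (‖x‖ * ‖S x‖) ≤ c * (‖x+y‖*‖x+y‖ + ‖x-y‖*‖x-y‖) := by linarith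
          _ = 2 * c * (‖x‖*‖x‖ + ‖y‖*‖y‖) := by rw [hpar]; ring
      rw [hny] at this
      rcases eq_or_ne x 0 with rfl | hx
      · simp at h0
      · have hpos : (0:ℝ) < ‖x‖ := norm_pos_iff.2 hx
        nlinarith
  exact S.opNorm_le_bound hc key

lemma bound_one (T : E →L[ℂ] E) {w : ℝ} (hw : 0 ≤ w)
    (hB : ∀ x : E, ‖x‖ = 1 → ‖(⟪x, T x⟫_ℂ)‖ ≤ w) :
    ‖T + ContinuousLinearMap.adjoint T‖ ≤ 2 * w := by
  apply selfadj_norm_le _ _ (by linarith)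
  · intro x hx
    have hadj : ⟪x, ContinuousLinearMap.adjoint T x⟫_ℂ = (starRingEnd ℂ) ⟪x, T x⟫_ℂ := by
      rw [ContinuousLinearMap.adjoint_inner_right, ← inner_conj_symm]
    rw [ContinuousLinearMap.add_apply, inner_add_right, hadj, Complex.add_conj]
    have : ‖((2 * (⟪x, T x⟫_ℂ).re : ℝ) : ℂ)‖ = 2 * |(⟪x, T x⟫_ℂ).re| := by
      rw [Complex.norm_real, Real.norm_eq_abs, abs_mul]
      norm_num
    rw [this]
    have := Complex.abs_re_le_norm ⟪x, T x⟫_ℂ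
    have hB' := hB x hx
    nlinarith [abs_nonneg (⟪x, T x⟫_ℂ).re]
  · rw [IsSelfAdjoint, star_add, ContinuousLinearMap.star_eq_adjoint,
      ContinuousLinearMap.star_eq_adjoint, ContinuousLinearMap.adjoint_adjoint, add_comm]

lemma bound_two (T : E →L[ℂ] E) {w : ℝ} (hw : 0 ≤ w)
    (hB : ∀ x : E, ‖x‖ = 1 → ‖(⟪x, T x⟫_ℂ)‖ ≤ w) :
    ‖T - ContinuousLinearMap.adjoint T‖ ≤ 2 * w := by
  have hkey : ‖Complex.I • (T - ContinuousLinearMap.adjoint T)‖ ≤ 2 * w := by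
    apply selfadj_norm_le _ _ (by linarith)
    · intro x hx
      have hadj : ⟪x, ContinuousLinearMap.adjoint T x⟫_ℂ = (starRingEnd ℂ) ⟪x, T x⟫_ℂ := by
        rw [ContinuousLinearMap.adjoint_inner_right, ← inner_conj_symm]
      rw [ContinuousLinearMap.smul_apply, inner_smul_right, ContinuousLinearMap.sub_apply,
        inner_sub_right, hadj, Complex.sub_conj]
      rw [norm_mul, norm_mul]
      simp only [Complex.norm_I, one_mul]
      rw [Complex.norm_real, Real.norm_eq_abs]
      have : |(2 * (⟪x, T x⟫_ℂ).im : ℝ)| = 2 * |(⟪x, T x⟫_ℂ).im| := by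
        rw [abs_mul]; norm_num
      rw [this, mul_one]
      have := Complex.abs_im_le_norm ⟪x, T x⟫_ℂ
      have hB' := hB x hx
      nlinarith [abs_nonneg (⟪x, T x⟫_ℂ).im]
    · rw [IsSelfAdjoint, star_smul, star_sub, ContinuousLinearMap.star_eq_adjoint,
        ContinuousLinearMap.star_eq_adjoint, ContinuousLinearMap.adjoint_adjoint]
      simp only [Complex.star_def, Complex.conj_I, neg_smul, smul_sub]
      abel
  calc ‖T - ContinuousLinearMap.adjoint T‖
      = ‖Complex.I • (T - ContinuousLinearMap.adjoint T)‖ := by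
        rw [norm_smul, Complex.norm_I, one_mul]
    _ ≤ 2 * w := hkey

lemma core_lemma (T : E →L[ℂ] E) {c : ℝ}
    (h1 : ‖T + ContinuousLinearMap.adjoint T‖ ≤ c)
    (h2 : ‖T - ContinuousLinearMap.adjoint T‖ ≤ c)
    (v : E) (hv : ‖v‖ = 1) (hTv : ‖T v‖ = c) :
    ContinuousLinearMap.adjoint T v = 0 := by
  set T' := ContinuousLinearMap.adjoint T
  have hc : 0 ≤ c := hTv ▸ norm_nonneg _
  have e1 : ‖T v + T' v‖ ≤ c := by
    have := (T + T').le_opNorm v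
    simp only [ContinuousLinearMap.add_apply] at this
    calc ‖T v + T' v‖ ≤ ‖T + T'‖ * ‖v‖ := this
      _ ≤ c := by rw [hv]; simpa using h1
  have e2 : ‖T v - T' v‖ ≤ c := by
    have := (T - T').le_opNorm v
    simp only [ContinuousLinearMap.sub_apply] at this
    calc ‖T v - T' v‖ ≤ ‖T - T'‖ * ‖v‖ := this
      _ ≤ c := by rw [hv]; simpa using h2
  have hpar : ‖T v + T' v‖*‖T v + T' v‖ + ‖T v - T' v‖*‖T v - T' v‖
      = 2 * (‖T v‖*‖T v‖ + ‖T' v‖*‖T' v‖) := by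
    simpa only [sq] using parallelogram_law_with_norm ℂ (T v) (T' v)
  have hz : ‖T' v‖ * ‖T' v‖ ≤ 0 := by nlinarith [norm_nonneg (T v + T' v), norm_nonneg (T v - T' v)]
  have : ‖T' v‖ = 0 := by nlinarith [norm_nonneg (T' v)]
  exact norm_eq_zero.1 this

lemma range_adjoint_eq [FiniteDimensional ℂ E] (T : E →L[ℂ] E) :
    LinearMap.range (ContinuousLinearMap.adjoint T : E →ₗ[ℂ] E) = (LinearMap.ker (T : E →ₗ[ℂ] E) : Submodule ℂ E)ᗮ := by
  have horth : (LinearMap.range (ContinuousLinearMap.adjoint T : E →ₗ[ℂ] E) : Submodule ℂ E)ᗮ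
      = LinearMap.ker (T : E →ₗ[ℂ] E) := by
    ext x
    simp only [Submodule.mem_orthogonal, LinearMap.mem_range, LinearMap.mem_ker,
      forall_exists_index]
    constructor
    · intro hx
      have h0 : ∀ y : E, ⟪y, T x⟫_ℂ = 0 := by
        intro y
        have := hx (ContinuousLinearMap.adjoint T y) y rfl
        rwa [ContinuousLinearMap.adjoint_inner_left] at this
      have := h0 (T x)
      rw [inner_self_eq_zero] at this
      exact this
    · intro hx u y hy
      subst hy
      rw [ContinuousLinearMap.coe_coe, ContinuousLinearMap.adjoint_inner_left, (show T x = 0 from hx), inner_zero_right]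
  have hcl : (LinearMap.range (ContinuousLinearMap.adjoint T : E →ₗ[ℂ] E) : Submodule ℂ E)ᗮᗮ
      = LinearMap.range (ContinuousLinearMap.adjoint T : E →ₗ[ℂ] E) :=
    Submodule.orthogonal_orthogonal _
  rw [← hcl, horth]

lemma main_half [FiniteDimensional ℂ E] (T : E →L[ℂ] E) {s : ℝ} (hs : 0 < s) (hT : ‖T‖ = s)
    (h1 : ‖T + ContinuousLinearMap.adjoint T‖ ≤ s)
    (h2 : ‖T - ContinuousLinearMap.adjoint T‖ ≤ s)
    (v : E) (hv : ‖T v‖ = s * ‖v‖) :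
    ContinuousLinearMap.adjoint T v = 0 ∧
      v ∈ LinearMap.range (ContinuousLinearMap.adjoint T : E →ₗ[ℂ] E) := by
  rcases eq_or_ne v 0 with rfl | hv0
  · simp
  have hnv : (0:ℝ) < ‖v‖ := norm_pos_iff.2 hv0
  constructor
  · have hunit : ‖((‖v‖:ℂ)⁻¹) • v‖ = 1 := by
      rw [norm_smul]; simp [hnv.ne']
    have hTu : ‖T (((‖v‖:ℂ)⁻¹) • v)‖ = s := by
      rw [map_smul, norm_smul, hv]
      have h' : ‖((‖v‖:ℂ)⁻¹)‖ = ‖v‖⁻¹ := by simp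
      rw [h']
      field_simp
    have hcz := core_lemma T h1 h2 _ hunit hTu
    rw [map_smul] at hcz
    have h0 : ((‖v‖:ℂ)⁻¹) ≠ 0 := by simp [hnv.ne']
    exact (smul_eq_zero.1 hcz).resolve_left h0
  · rw [range_adjoint_eq]
    set K : Submodule ℂ E := LinearMap.ker (T : E →ₗ[ℂ] E) with hK
    set p : E := (K.orthogonalProjectionOnto v : E) with hp
    have hqmem : v - p ∈ Kᗮ := K.sub_starProjection_mem_orthogonal v
    have hpmem : p ∈ K := (K.orthogonalProjectionOnto v).2
    have hTp : T p = 0 := hpmem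
    have hTveq : T v = T (v - p) := by rw [map_sub, hTp, sub_zero]
    have hle : s * ‖v‖ ≤ s * ‖v - p‖ := by
      calc s * ‖v‖ = ‖T v‖ := hv.symm
        _ = ‖T (v - p)‖ := by rw [hTveq]
        _ ≤ ‖T‖ * ‖v - p‖ := T.le_opNorm _
        _ = s * ‖v - p‖ := by rw [hT]
    have hvq : ‖v‖ ≤ ‖v - p‖ := le_of_mul_le_mul_left hle hs
    have hinner : ⟪p, v - p⟫_ℂ = 0 := hqmem p hpmem
    have hpyth : ‖v‖ * ‖v‖ = ‖p‖ * ‖p‖ + ‖v - p‖ * ‖v - p‖ := by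
      have hdecomp : v = p + (v - p) := by abel
      calc ‖v‖ * ‖v‖ = ‖p + (v - p)‖ * ‖p + (v - p)‖ := by rw [← hdecomp]
        _ = ‖p‖ * ‖p‖ + ‖v - p‖ * ‖v - p‖ := by
            rw [← norm_add_sq_eq_norm_sq_add_norm_sq_of_inner_eq_zero p (v - p) hinner]
    have hpz : ‖p‖ = 0 := by nlinarith [norm_nonneg p, norm_nonneg v, norm_nonneg (v - p)]
    have : p = 0 := norm_eq_zero.1 hpz
    have : v = v - p := by rw [this, sub_zero]
    rw [this]
    exact hqmem

lemma exists_max [FiniteDimensional ℂ E] (T : E →L[ℂ] E) (x₁ : E) (hx₁ : ‖x₁‖ = 1) :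
    ∃ x : E, ‖x‖ = 1 ∧ ‖T x‖ = ‖T‖ := by
  have hsphere : (Metric.sphere (0 : E) 1).Nonempty := ⟨x₁, by simpa using hx₁⟩
  obtain ⟨x0, hx0mem, hmax⟩ := (isCompact_sphere (0 : E) 1).exists_isMaxOn
    hsphere (T.continuous.norm.continuousOn)
  have hx0 : ‖x0‖ = 1 := by simpa using hx0mem
  refine ⟨x0, hx0, ?_⟩
  have hle : ‖T x0‖ ≤ ‖T‖ := by
    calc ‖T x0‖ ≤ ‖T‖ * ‖x0‖ := T.le_opNorm x0
      _ = ‖T‖ := by rw [hx0, mul_one]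
  have hge : ‖T‖ ≤ ‖T x0‖ := by
    apply T.opNorm_le_bound (norm_nonneg _)
    intro x
    rcases eq_or_ne x 0 with rfl | hx
    · simp
    · have hnx : (0:ℝ) < ‖x‖ := norm_pos_iff.2 hx
      have hxs : ((‖x‖:ℂ)⁻¹) • x ∈ Metric.sphere (0 : E) 1 := by
        simp [norm_smul, hnx.ne']
      have hb := hmax hxs
      simp only [Set.mem_setOf_eq] at hb
      have hTx : ‖T (((‖x‖:ℂ)⁻¹) • x)‖ = ‖x‖⁻¹ * ‖T x‖ := by
        rw [_root_.map_smul, norm_smul]; simp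
      rw [hTx] at hb
      calc ‖T x‖ = ‖x‖ * (‖x‖⁻¹ * ‖T x‖) := by field_simp
        _ ≤ ‖x‖ * ‖T x0‖ := mul_le_mul_of_nonneg_left hb (norm_nonneg x)
        _ = ‖T x0‖ * ‖x‖ := by ring
  linarith

end bounds

open Matrix in
theorem stmt9 {n : ℕ} (A : Matrix (Fin n) (Fin n) ℂ) (hA : A ≠ 0)
    (h : opNorm A = 2 * numRadius A) :
    (∀ v : EuclideanSpace ℂ (Fin n), ‖toCLM A v‖ = opNorm A * ‖v‖ →
      ContinuousLinearMap.adjoint (toCLM A) v = 0 ∧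
        v ∈ LinearMap.range (ContinuousLinearMap.adjoint (toCLM A) : EuclideanSpace ℂ (Fin n) →ₗ[ℂ] EuclideanSpace ℂ (Fin n))) ∧
    (∀ u : EuclideanSpace ℂ (Fin n), ‖ContinuousLinearMap.adjoint (toCLM A) u‖ = opNorm A * ‖u‖ →
      toCLM A u = 0 ∧ u ∈ LinearMap.range (toCLM A : EuclideanSpace ℂ (Fin n) →ₗ[ℂ] EuclideanSpace ℂ (Fin n))) ∧
    (∀ v u : EuclideanSpace ℂ (Fin n), ‖toCLM A v‖ = opNorm A * ‖v‖ →
      ‖ContinuousLinearMap.adjoint (toCLM A) u‖ = opNorm A * ‖u‖ → ⟪v, u⟫_ℂ = 0) ∧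
    ¬ IsUnit A := by
  set T := toCLM A with hTdef
  set T' := ContinuousLinearMap.adjoint T with hT'def
  set s := opNorm A with hsdef
  set w := numRadius A with hwdef
  -- T ≠ 0
  have hT0 : T ≠ 0 := by
    intro h0
    apply hA
    have h0' : Matrix.toEuclideanCLM (𝕜 := ℂ) A = 0 := h0
    calc A = (Matrix.toEuclideanCLM (𝕜 := ℂ)).symm (Matrix.toEuclideanCLM (𝕜 := ℂ) A) :=
          (StarAlgEquiv.symm_apply_apply _ _).symm
      _ = 0 := by rw [h0', map_zero]
  have hs_pos : (0:ℝ) < s := norm_pos_iff.2 hT0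
  have hw0 : (0:ℝ) ≤ w := by linarith [h]
  -- numerical radius bound
  have hB : ∀ x : EuclideanSpace ℂ (Fin n), ‖x‖ = 1 → ‖(⟪x, T x⟫_ℂ)‖ ≤ w := by
    intro x hx
    have hbdd : BddAbove {r : ℝ | ∃ z : EuclideanSpace ℂ (Fin n),
        ‖z‖ = 1 ∧ r = ‖(⟪z, toCLM A z⟫_ℂ)‖} := by
      refine ⟨‖T‖, ?_⟩
      rintro r ⟨z, hz, rfl⟩
      calc ‖(⟪z, toCLM A z⟫_ℂ)‖ ≤ ‖z‖ * ‖toCLM A z‖ := norm_inner_le_norm _ _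
        _ ≤ ‖z‖ * (‖T‖ * ‖z‖) := by
            exact mul_le_mul_of_nonneg_left (T.le_opNorm z) (norm_nonneg z)
        _ = ‖T‖ := by rw [hz]; ring
    exact le_csSup hbdd ⟨x, hx, rfl⟩
  have h1 : ‖T + T'‖ ≤ s := by
    rw [h]; exact bound_one T hw0 hB
  have h2 : ‖T - T'‖ ≤ s := by
    rw [h]; exact bound_two T hw0 hB
  have hTnorm : ‖T‖ = s := rfl
  have hT'norm : ‖T'‖ = s := by
    rw [hT'def, (ContinuousLinearMap.adjoint (𝕜 := ℂ)).norm_map T]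
    exact hTnorm
  -- adjoint of T' is T
  have hadj' : ContinuousLinearMap.adjoint T' = T := ContinuousLinearMap.adjoint_adjoint T
  have h1' : ‖T' + ContinuousLinearMap.adjoint T'‖ ≤ s := by rwa [hadj', add_comm]
  have h2' : ‖T' - ContinuousLinearMap.adjoint T'‖ ≤ s := by
    rw [hadj']
    rwa [← norm_neg, neg_sub]
  have bullet1 : ∀ v : EuclideanSpace ℂ (Fin n), ‖T v‖ = s * ‖v‖ →
      T' v = 0 ∧ v ∈ LinearMap.range (T' : EuclideanSpace ℂ (Fin n) →ₗ[ℂ] EuclideanSpace ℂ (Fin n)) :=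
    fun v hv => main_half T hs_pos hTnorm h1 h2 v hv
  have bullet2 : ∀ u : EuclideanSpace ℂ (Fin n), ‖T' u‖ = s * ‖u‖ →
      T u = 0 ∧ u ∈ LinearMap.range (T : EuclideanSpace ℂ (Fin n) →ₗ[ℂ] EuclideanSpace ℂ (Fin n)) := by
    intro u hu
    have := main_half T' hs_pos hT'norm h1' h2' u hu
    rwa [hadj'] at this
  refine ⟨bullet1, bullet2, ?_, ?_⟩
  · intro v u hv hu
    obtain ⟨-, y, rfl⟩ := bullet1 v hv
    obtain ⟨hTu, -⟩ := bullet2 u hu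
    rw [ContinuousLinearMap.coe_coe, ContinuousLinearMap.adjoint_inner_left, hTu, inner_zero_right]
  · -- not a unit
    intro hU
    -- existence of a norm-attaining unit vector
    have hn : n ≠ 0 := by
      rintro rfl
      exact hA (by ext i j; exact i.elim0)
    have : Nonempty (Fin n) := ⟨⟨0, Nat.pos_of_ne_zero hn⟩⟩
    obtain ⟨x0, hx0, hM0⟩ := exists_max T
      (EuclideanSpace.single (⟨0, Nat.pos_of_ne_zero hn⟩ : Fin n) 1)
      (by simp [EuclideanSpace.norm_single])
    have hM : ‖T x0‖ = s := by rw [hM0]; exact hTnorm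
    have hx0v : ‖T x0‖ = s * ‖x0‖ := by rw [hM, hx0, mul_one]
    obtain ⟨hT'x0, -⟩ := bullet1 x0 hx0v
    -- T' = toCLM Aᴴ
    have hT'eq : T' = toCLM Aᴴ := by
      rw [hT'def, hTdef]
      simp only [toCLM]
      rw [← ContinuousLinearMap.star_eq_adjoint, ← map_star, Matrix.star_eq_conjTranspose]
    -- A unit implies Aᴴ unit
    have hUH : IsUnit Aᴴ := by
      rw [Matrix.isUnit_iff_isUnit_det] at hU ⊢
      rw [Matrix.det_conjTranspose]
      exact hU.star
    obtain ⟨B, hB1, hB2⟩ := _root_.isUnit_iff_exists.mp hUH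
    have : x0 = 0 := by
      have hcomp : toCLM B (toCLM Aᴴ x0) = x0 := by
        have : toCLM B * toCLM Aᴴ = 1 := by
          simp only [toCLM]
          rw [← _root_.map_mul, hB2, _root_.map_one]
        calc toCLM B (toCLM Aᴴ x0) = (toCLM B * toCLM Aᴴ) x0 := rfl
          _ = x0 := by rw [this]; rfl
      rw [← hcomp, ← hT'eq, hT'x0, map_zero]
    rw [this] at hx0
    simp at hx0
end
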